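/- Let 0 < a < b and y ≥ 1. Then b^(b-1)(a+y-1)^(a+y-1) / (a^(a-1)(b+y-1)^(b+y-1)) ≤ B(b,y)/B(a,y) ≤ a(b+1)^(b+1)(a+y)^(a+y) / (b(a+1)^(a+1)(b+y)^(b+y)). -/

import Mathlib

open Real MeasureTheory intervalIntegral Filter Finset Topology

noncomputable def B (x y : ℝ) : ℝ := ∫ t in (0:ℝ)..1, t ^ (x - 1) * (1 - t) ^ (y - 1)

lemma B_eq {x y : ℝ} (hx : 0 < x) (hy : 0 < y) :
    B x y = Real.Gamma x * Real.Gamma y / Real.Gamma (x + y) := by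
  have hco : (B x y : ℂ) = Complex.betaIntegral x y := by
    rw [B, Complex.betaIntegral, ← intervalIntegral.integral_ofReal]
    refine intervalIntegral.integral_congr fun t ht => ?_
    rw [Set.uIcc_of_le (by norm_num : (0:ℝ) ≤ 1)] at ht
    push_cast
    rw [Complex.ofReal_cpow ht.1, Complex.ofReal_cpow (by linarith [ht.2] : (0:ℝ) ≤ 1 - t)]
    push_cast
    ring_nf
  have h := Complex.Gamma_mul_Gamma_eq_betaIntegral
    (s := (x:ℂ)) (t := (y:ℂ)) (by simpa using hx) (by simpa using hy)
  rw [← hco, ← Complex.ofReal_add, Complex.Gamma_ofReal, Complex.Gamma_ofReal,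
    Complex.Gamma_ofReal, ← Complex.ofReal_mul, ← Complex.ofReal_mul] at h
  have h2 : Real.Gamma x * Real.Gamma y = Real.Gamma (x + y) * B x y := by
    exact_mod_cast h
  rw [h2]
  field_simp [Real.Gamma_pos_of_pos (by positivity : (0:ℝ) < x + y) |>.ne']

lemma mono_aux {f f' : ℝ → ℝ} (hf : ∀ x > (0:ℝ), HasDerivAt f (f' x) x)
    (h0 : ∀ x > (0:ℝ), 0 ≤ f' x) {s w : ℝ} (hs : 0 < s) (hsw : s ≤ w) : f s ≤ f w := by
  have hmono : MonotoneOn f (Set.Ioi (0:ℝ)) := by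
    refine monotoneOn_of_deriv_nonneg (convex_Ioi 0) ?_ ?_ ?_
    · exact fun x hx => (hf x hx).continuousAt.continuousWithinAt
    · intro x hx
      rw [interior_Ioi] at hx
      exact (hf x hx).differentiableAt.differentiableWithinAt
    · intro x hx
      rw [interior_Ioi] at hx
      rw [(hf x hx).deriv]
      exact h0 x hx
  exact hmono hs (lt_of_lt_of_le hs hsw) hsw

lemma F_mono {s w : ℝ} (hs : 0 < s) (hsw : s ≤ w) :
    log (s+1) - log s - 1/s ≤ log (w+1) - log w - 1/w := by
  refine mono_aux (f := fun x => log (x+1) - log x - 1/x)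
    (f' := fun x => 1/(x+1) - 1/x + 1/x^2) ?_ ?_ hs hsw
  · intro x hx
    have h1 : HasDerivAt (fun x : ℝ => log (x+1)) (1/(x+1)) x := by
      simpa using ((hasDerivAt_id x).add_const 1).log (by positivity)
    have h2 : HasDerivAt (fun x : ℝ => log x) (1/x) x := by
      simpa using (hasDerivAt_id x).log hx.ne'
    have h3 : HasDerivAt (fun x : ℝ => 1/x) (-(1/x^2)) x := by
      simpa using (hasDerivAt_inv hx.ne')
    refine ((h1.sub h2).sub h3).congr_deriv ?_
    ring
  · intro x hx
    have h : 1/x - 1/(x+1) = 1/(x*(x+1)) := by field_simp; ring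
    have h2 : 1/(x*(x+1)) ≤ 1/x^2 := by
      apply one_div_le_one_div_of_le (by positivity)
      nlinarith
    linarith [h, h2]

lemma G_anti {s w : ℝ} (hs : 0 < s) (hsw : s ≤ w) :
    log (w+1) - log w - 1/(w+1) ≤ log (s+1) - log s - 1/(s+1) := by
  have := mono_aux (f := fun x => -(log (x+1) - log x - 1/(x+1)))
    (f' := fun x => -(1/(x+1) - 1/x + 1/(x+1)^2)) ?_ ?_ hs hsw
  · linarith [this]
  · intro x hx
    have h1 : HasDerivAt (fun x : ℝ => log (x+1)) (1/(x+1)) x := by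
      simpa using ((hasDerivAt_id x).add_const 1).log (by positivity)
    have h2 : HasDerivAt (fun x : ℝ => log x) (1/x) x := by
      simpa using (hasDerivAt_id x).log hx.ne'
    have h3 : HasDerivAt (fun x : ℝ => 1/(x+1)) (-(1/(x+1)^2)) x := by
      have := (hasDerivAt_inv (by positivity : x + 1 ≠ 0)).comp x ((hasDerivAt_id x).add_const 1)
      simpa [one_div, Function.comp_def] using this
    refine (((h1.sub h2).sub h3).neg).congr_deriv ?_
    ring
  · intro x hx
    have h : 1/x - 1/(x+1) = 1/(x*(x+1)) := by field_simp; ring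
    have h2 : 1/(x+1)^2 ≤ 1/(x*(x+1)) := by
      apply one_div_le_one_div_of_le (by positivity)
      nlinarith
    show 0 ≤ -(1/(x+1) - 1/x + 1/(x+1)^2)
    linarith

lemma ratio_tendsto {α β γ δ : ℝ} (hα : 0 < α) (hβ : 0 < β) (hγ : 0 < γ) (hδ : 0 < δ)
    (h : α + δ = β + γ) :
    Tendsto (fun n : ℕ => ∑ k ∈ range (n+1),
      (log (β+k) + log (γ+k) - log (α+k) - log (δ+k))) atTop
      (𝓝 (log (Real.Gamma α * Real.Gamma δ / (Real.Gamma β * Real.Gamma γ)))) := by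
  have hpos : ∀ p : ℝ, 0 < p → 0 < Real.Gamma p := fun p hp => Real.Gamma_pos_of_pos hp
  have hR : 0 < Real.Gamma α * Real.Gamma δ / (Real.Gamma β * Real.Gamma γ) := by
    apply div_pos (mul_pos (hpos _ hα) (hpos _ hδ)) (mul_pos (hpos _ hβ) (hpos _ hγ))
  have h1 : Tendsto (fun n => Real.GammaSeq α n * Real.GammaSeq δ n /
      (Real.GammaSeq β n * Real.GammaSeq γ n)) atTop
      (𝓝 (Real.Gamma α * Real.Gamma δ / (Real.Gamma β * Real.Gamma γ))) := by
    exact ((Real.GammaSeq_tendsto_Gamma α).mul (Real.GammaSeq_tendsto_Gamma δ)).div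
      ((Real.GammaSeq_tendsto_Gamma β).mul (Real.GammaSeq_tendsto_Gamma γ))
      (ne_of_gt (mul_pos (hpos _ hβ) (hpos _ hγ)))
  have h2 := (Real.continuousAt_log hR.ne').tendsto.comp h1
  refine h2.congr' ?_
  filter_upwards [eventually_ge_atTop 1] with n hn
  have hn0 : (0:ℝ) < (n:ℝ) := by exact_mod_cast hn
  have hprodpos : ∀ p : ℝ, 0 < p → (0:ℝ) < ∏ j ∈ range (n+1), (p + j) := by
    intro p hp
    exact Finset.prod_pos fun j _ => by positivity
  have key : (n:ℝ)^α * (n:ℝ)^δ = (n:ℝ)^β * (n:ℝ)^γ := by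
    rw [← rpow_add hn0, ← rpow_add hn0, h]
  have hident : Real.GammaSeq α n * Real.GammaSeq δ n /
      (Real.GammaSeq β n * Real.GammaSeq γ n) =
      ∏ k ∈ range (n+1), ((β+k) * (γ+k) / ((α+k) * (δ+k))) := by
    simp only [Real.GammaSeq]
    simp only [Finset.prod_div_distrib, Finset.prod_mul_distrib]
    have h1 := (hprodpos _ hα).ne'
    have h2 := (hprodpos _ hβ).ne'
    have h3 := (hprodpos _ hγ).ne'
    have h4 := (hprodpos _ hδ).ne'
    have h5 : ((n:ℝ)^α) ≠ 0 := (rpow_pos_of_pos hn0 _).ne'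
    have h6 : ((n:ℝ)^β) ≠ 0 := (rpow_pos_of_pos hn0 _).ne'
    have h7 : ((n:ℝ)^γ) ≠ 0 := (rpow_pos_of_pos hn0 _).ne'
    have h8 : ((n:ℝ)^δ) ≠ 0 := (rpow_pos_of_pos hn0 _).ne'
    have h9 : (n.factorial : ℝ) ≠ 0 := (Nat.cast_pos.mpr (Nat.factorial_pos n)).ne'
    field_simp
    linear_combination key
  simp only [Function.comp_apply, hident]
  rw [Real.log_prod]
  · refine Finset.sum_congr rfl fun k _ => ?_
    have k1 : (0:ℝ) < α + k := by positivity
    have k2 : (0:ℝ) < β + k := by positivity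
    have k3 : (0:ℝ) < γ + k := by positivity
    have k4 : (0:ℝ) < δ + k := by positivity
    rw [Real.log_div (by positivity) (by positivity), Real.log_mul k2.ne' k3.ne',
      Real.log_mul k1.ne' k4.ne']
    ring
  · intro k _
    have k1 : (0:ℝ) < α + k := by positivity
    have k4 : (0:ℝ) < δ + k := by positivity
    positivity

lemma hd_log' (c x : ℝ) (h : 0 < x + c) :
    HasDerivAt (fun t => Real.log (t + c)) (1/(x+c)) x := by
  simpa using ((hasDerivAt_id x).add_const c).log h.ne'

lemma hd_mul_log (c x : ℝ) (h : 0 < x + c) :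
    HasDerivAt (fun t => (t + c) * Real.log (t + c)) (Real.log (x+c) + 1) x := by
  have h1 : HasDerivAt (fun t : ℝ => t + c) 1 x := (hasDerivAt_id x).add_const c
  have := h1.mul (hd_log' c x h)
  refine this.congr_deriv ?_
  field_simp

noncomputable def Un (y : ℝ) (n : ℕ) (t : ℝ) : ℝ :=
  (t+((n:ℝ)+1)) * Real.log (t+((n:ℝ)+1)) - (t+(y+(n:ℝ))) * Real.log (t+(y+(n:ℝ)))
    - Real.log (t+((n:ℝ)+1))

noncomputable def Tn (y : ℝ) (n : ℕ) (x : ℝ) : ℝ :=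
  (Real.log (x+((n:ℝ)+1)) + 1) - (Real.log (x+(y+(n:ℝ))) + 1) - 1/(x+((n:ℝ)+1))

lemma hd_Un {y : ℝ} (hy : 1 ≤ y) (n : ℕ) {x : ℝ} (hx : 0 < x) :
    HasDerivAt (Un y n) (Tn y n x) x := by
  have h1 : (0:ℝ) < x + ((n:ℝ)+1) := by positivity
  have h2 : (0:ℝ) < x + (y+(n:ℝ)) := by
    have : (0:ℝ) ≤ (n:ℝ) := Nat.cast_nonneg n
    nlinarith
  exact ((hd_mul_log _ x h1).sub (hd_mul_log _ x h2)).sub (hd_log' _ x h1)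

lemma Tn_bound {y : ℝ} (hy : 1 ≤ y) (n : ℕ) {x : ℝ} (hx : 0 < x) :
    |Tn y n x| ≤ y / ((n:ℝ)+1) := by
  have hn : (0:ℝ) ≤ (n:ℝ) := Nat.cast_nonneg n
  have h1 : (0:ℝ) < x + ((n:ℝ)+1) := by positivity
  have h2 : (0:ℝ) < x + (y+(n:ℝ)) := by nlinarith
  have hle : x + ((n:ℝ)+1) ≤ x + (y+(n:ℝ)) := by linarith
  rw [abs_le]
  have hlog : Real.log (x+(y+(n:ℝ))) - Real.log (x+((n:ℝ)+1)) ≤ (y-1)/(x+((n:ℝ)+1)) := by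
    rw [← Real.log_div h2.ne' h1.ne']
    calc Real.log ((x+(y+(n:ℝ)))/(x+((n:ℝ)+1)))
        ≤ (x+(y+(n:ℝ)))/(x+((n:ℝ)+1)) - 1 := Real.log_le_sub_one_of_pos (div_pos h2 h1)
      _ = (y-1)/(x+((n:ℝ)+1)) := by field_simp; ring
  constructor
  · have hfr : (y-1)/(x+((n:ℝ)+1)) ≤ (y-1)/((n:ℝ)+1) :=
      div_le_div_of_nonneg_left (by linarith) (by positivity) (by linarith)
    have hfr2 : 1/(x+((n:ℝ)+1)) ≤ 1/((n:ℝ)+1) :=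
      div_le_div_of_nonneg_left (by norm_num) (by positivity) (by linarith)
    have : (y-1)/((n:ℝ)+1) + 1/((n:ℝ)+1) = y/((n:ℝ)+1) := by field_simp; ring
    simp only [Tn]
    linarith
  · have hlog2 : Real.log (x+((n:ℝ)+1)) ≤ Real.log (x+(y+(n:ℝ))) := by gcongr
    have h3 : 0 < 1/(x+((n:ℝ)+1)) := by positivity
    have h4 : 0 ≤ y/((n:ℝ)+1) := by positivity
    simp only [Tn]
    linarith

lemma Un_diff_bound {y : ℝ} (hy : 1 ≤ y) (n : ℕ) {s w : ℝ} (hs : 0 < s) (hsw : s ≤ w) :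
    |Un y n w - Un y n s| ≤ (y / ((n:ℝ)+1)) * (w - s) := by
  have h1 : ∀ x > (0:ℝ), HasDerivAt (fun t => (y/((n:ℝ)+1)) * t + Un y n t)
      (y/((n:ℝ)+1) + Tn y n x) x := fun x hx =>
    by simpa using ((hasDerivAt_id x).const_mul (y/((n:ℝ)+1))).fun_add (hd_Un hy n hx)
  have h2 : ∀ x > (0:ℝ), HasDerivAt (fun t => (y/((n:ℝ)+1)) * t - Un y n t)
      (y/((n:ℝ)+1) - Tn y n x) x := fun x hx =>
    by simpa using ((hasDerivAt_id x).const_mul (y/((n:ℝ)+1))).fun_sub (hd_Un hy n hx)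
  have b1 := mono_aux h1 (fun x hx => by
    have := abs_le.mp (Tn_bound hy n hx); linarith [this.1]) hs hsw
  have b2 := mono_aux h2 (fun x hx => by
    have := abs_le.mp (Tn_bound hy n hx); linarith [this.2]) hs hsw
  rw [abs_le]
  constructor <;> [skip; skip] <;> nlinarith [b1, b2]
lemma lower_core {a b y : ℝ} (ha : 0 < a) (hab : a < b) (hy : 1 ≤ y) :
    (b-1)*log b - (a-1)*log a + (a+(y-1))*log (a+(y-1)) - (b+(y-1))*log (b+(y-1))
      ≤ log (Real.Gamma b * Real.Gamma (a+y) / (Real.Gamma a * Real.Gamma (b+y))) := by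
  have hb : 0 < b := ha.trans hab
  have hay : 0 < a + y := by linarith
  have hby : 0 < b + y := by linarith
  have hlim := ratio_tendsto (α:=b) (β:=a) (γ:=b+y) (δ:=a+y) hb ha hby hay (by ring)
  set C : ℝ := (b-1)*log b - (a-1)*log a + (a+(y-1))*log (a+(y-1))
    - (b+(y-1))*log (b+(y-1)) with hC
  have key : ∀ n : ℕ, C - (y/((n:ℝ)+1)) * (b-a)
      ≤ ∑ k ∈ range (n+1), (log (a+↑k) + log (b+y+↑k) - log (b+↑k) - log (a+y+↑k)) := by
    intro n
    set Φ : ℝ → ℝ := fun t => (∑ k ∈ range (n+1), (log (t+(y+↑k)) - log (t+↑k)))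
      - (t-1)*log t + (t+(y-1))*log (t+(y-1)) + Un y n t with hΦ
    have hmono : Φ a ≤ Φ b := by
      refine mono_aux (f' := fun x => (∑ k ∈ range (n+1), (1/(x+(y+↑k)) - 1/(x+↑k)))
        - (1*log x + (x-1)*(1/x)) + (log (x+(y-1)) + 1) + Tn y n x) ?_ ?_ ha hab.le
      · intro x hx
        have hsum : HasDerivAt (fun t => ∑ k ∈ range (n+1), (log (t+(y+↑k)) - log (t+↑k)))
            (∑ k ∈ range (n+1), (1/(x+(y+↑k)) - 1/(x+↑k))) x := by
          apply HasDerivAt.fun_sum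
          intro k _
          have hk0 : (0:ℝ) ≤ (k:ℝ) := Nat.cast_nonneg k
          exact (hd_log' (y+↑k) x (by nlinarith)).sub (hd_log' (↑k) x (by positivity))
        have h2 : HasDerivAt (fun t : ℝ => (t-1)*log t) (1*log x + (x-1)*(1/x)) x := by
          have := ((hasDerivAt_id x).sub_const 1).fun_mul
            (by simpa using (hasDerivAt_id x).log hx.ne' : HasDerivAt (fun t : ℝ => log t) (1/x) x)
          simpa using this
        have h3 : HasDerivAt (fun t : ℝ => (t+(y-1))*log (t+(y-1))) (log (x+(y-1)) + 1) x :=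
          hd_mul_log (y-1) x (by linarith)
        exact ((hsum.sub h2).add h3).add (hd_Un hy n hx)
      · intro x hx
        set f : ℕ → ℝ := fun k => log (x+↑k) - log (x+((y-1)+↑k)) - 1/(x+↑k) with hf
        have htel : ∑ k ∈ range (n+1), (f k - f (k+1)) = f 0 - f (n+1) :=
          Finset.sum_range_sub' f (n+1)
        have hterm : ∀ k ∈ range (n+1), f k - f (k+1) ≤ 1/(x+(y+↑k)) - 1/(x+↑k) := by
          intro k _
          have hk0 : (0:ℝ) ≤ (k:ℝ) := Nat.cast_nonneg k
          have hG := G_anti (s := x+↑k) (w := x+((y-1)+↑k)) (by positivity) (by linarith)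
          rw [show x+((y-1)+(k:ℝ))+1 = x+(y+↑k) from by ring,
            show x+(k:ℝ)+1 = x+((k:ℝ)+1) from by ring] at hG
          simp only [hf]
          push_cast
          rw [show (y:ℝ)-1+((k:ℝ)+1) = y+(k:ℝ) from by ring]
          linarith
        have hsum_ge : f 0 - f (n+1) ≤ ∑ k ∈ range (n+1), (1/(x+(y+↑k)) - 1/(x+↑k)) :=
          htel ▸ Finset.sum_le_sum hterm
        have hf0 : f 0 = log x - log (x+(y-1)) - 1/x := by
          simp only [hf]; norm_num
        have hfn : f (n+1) = log (x+((n:ℝ)+1)) - log (x+(y+(n:ℝ))) - 1/(x+((n:ℝ)+1)) := by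
          simp only [hf]
          push_cast
          rw [show (y:ℝ)-1+((n:ℝ)+1) = y+(n:ℝ) from by ring]
        have hdiv : (x-1)*(1/x) = 1 - 1/x := by field_simp
        simp only [Tn]
        rw [hf0, hfn] at hsum_ge
        linarith
    -- unfold the monotonicity conclusion
    have hLdiff : (∑ k ∈ range (n+1), (log (b+(y+↑k)) - log (b+↑k)))
        - (∑ k ∈ range (n+1), (log (a+(y+↑k)) - log (a+↑k)))
        = ∑ k ∈ range (n+1), (log (a+↑k) + log (b+y+↑k) - log (b+↑k) - log (a+y+↑k)) := by
      rw [← Finset.sum_sub_distrib]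
      refine Finset.sum_congr rfl fun k _ => ?_
      rw [show b+(y+(k:ℝ)) = b+y+(k:ℝ) from by ring, show a+(y+(k:ℝ)) = a+y+(k:ℝ) from by ring]
      ring
    have hUd := Un_diff_bound hy n ha hab.le
    rw [abs_le] at hUd
    simp only [hΦ] at hmono
    rw [← hLdiff]
    simp only [hC]
    linarith [hmono, hUd.1]
  have h0' : Tendsto (fun n:ℕ => ((n:ℝ)+1)) atTop atTop :=
    tendsto_atTop_add_const_right atTop 1 tendsto_natCast_atTop_atTop
  have h0 : Tendsto (fun n:ℕ => y/((n:ℝ)+1)) atTop (𝓝 0) := by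
    simpa [div_eq_mul_inv] using h0'.inv_tendsto_atTop.const_mul y
  have hbound : Tendsto (fun n:ℕ => C - (y/((n:ℝ)+1)) * (b-a)) atTop (𝓝 C) := by
    have := (tendsto_const_nhds (x := C) (f := (atTop : Filter ℕ))).sub (h0.mul_const (b-a))
    simpa using this
  exact le_of_tendsto_of_tendsto' hbound hlim key

noncomputable def Wn (y : ℝ) (n : ℕ) (t : ℝ) : ℝ :=
  (t+((n:ℝ)+2)) * Real.log (t+((n:ℝ)+2)) - (t+(y+((n:ℝ)+1))) * Real.log (t+(y+((n:ℝ)+1)))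

noncomputable def Sn (y : ℝ) (n : ℕ) (x : ℝ) : ℝ :=
  (Real.log (x+((n:ℝ)+2)) + 1) - (Real.log (x+(y+((n:ℝ)+1))) + 1)

lemma hd_Wn {y : ℝ} (hy : 1 ≤ y) (n : ℕ) {x : ℝ} (hx : 0 < x) :
    HasDerivAt (Wn y n) (Sn y n x) x := by
  have hn : (0:ℝ) ≤ (n:ℝ) := Nat.cast_nonneg n
  have h1 : (0:ℝ) < x + ((n:ℝ)+2) := by positivity
  have h2 : (0:ℝ) < x + (y+((n:ℝ)+1)) := by nlinarith
  exact (hd_mul_log _ x h1).sub (hd_mul_log _ x h2)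

lemma Sn_bound {y : ℝ} (hy : 1 ≤ y) (n : ℕ) {x : ℝ} (hx : 0 < x) :
    |Sn y n x| ≤ y / ((n:ℝ)+1) := by
  have hn : (0:ℝ) ≤ (n:ℝ) := Nat.cast_nonneg n
  have h1 : (0:ℝ) < x + ((n:ℝ)+2) := by positivity
  have h2 : (0:ℝ) < x + (y+((n:ℝ)+1)) := by nlinarith
  have hle : x + ((n:ℝ)+2) ≤ x + (y+((n:ℝ)+1)) := by linarith
  have hlog : Real.log (x+(y+((n:ℝ)+1))) - Real.log (x+((n:ℝ)+2)) ≤ (y-1)/(x+((n:ℝ)+2)) := by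
    rw [← Real.log_div h2.ne' h1.ne']
    calc Real.log ((x+(y+((n:ℝ)+1)))/(x+((n:ℝ)+2)))
        ≤ (x+(y+((n:ℝ)+1)))/(x+((n:ℝ)+2)) - 1 := Real.log_le_sub_one_of_pos (div_pos h2 h1)
      _ = (y-1)/(x+((n:ℝ)+2)) := by field_simp; ring
  have hfr : (y-1)/(x+((n:ℝ)+2)) ≤ (y-1)/((n:ℝ)+1) :=
    div_le_div_of_nonneg_left (by linarith) (by positivity) (by linarith)
  have hfr3 : (y-1)/((n:ℝ)+1) ≤ y/((n:ℝ)+1) := by gcongr; linarith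
  have hlog2 : Real.log (x+((n:ℝ)+2)) ≤ Real.log (x+(y+((n:ℝ)+1))) := by gcongr
  have h4 : 0 ≤ y/((n:ℝ)+1) := by positivity
  rw [abs_le]
  constructor <;> simp only [Sn] <;> linarith

lemma Wn_diff_bound {y : ℝ} (hy : 1 ≤ y) (n : ℕ) {s w : ℝ} (hs : 0 < s) (hsw : s ≤ w) :
    |Wn y n w - Wn y n s| ≤ (y / ((n:ℝ)+1)) * (w - s) := by
  have h1 : ∀ x > (0:ℝ), HasDerivAt (fun t => (y/((n:ℝ)+1)) * t + Wn y n t)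
      (y/((n:ℝ)+1) + Sn y n x) x := fun x hx =>
    by simpa using ((hasDerivAt_id x).const_mul (y/((n:ℝ)+1))).fun_add (hd_Wn hy n hx)
  have h2 : ∀ x > (0:ℝ), HasDerivAt (fun t => (y/((n:ℝ)+1)) * t - Wn y n t)
      (y/((n:ℝ)+1) - Sn y n x) x := fun x hx =>
    by simpa using ((hasDerivAt_id x).const_mul (y/((n:ℝ)+1))).fun_sub (hd_Wn hy n hx)
  have b1 := mono_aux h1 (fun x hx => by
    have := abs_le.mp (Sn_bound hy n hx); linarith [this.1]) hs hsw
  have b2 := mono_aux h2 (fun x hx => by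
    have := abs_le.mp (Sn_bound hy n hx); linarith [this.2]) hs hsw
  rw [abs_le]
  constructor <;> nlinarith [b1, b2]

lemma upper_core {a b y : ℝ} (ha : 0 < a) (hab : a < b) (hy : 1 ≤ y) :
    log (Real.Gamma (b+1) * Real.Gamma (a+y) / (Real.Gamma (a+1) * Real.Gamma (b+y)))
      ≤ (b+1)*log (b+1) - (a+1)*log (a+1) + (a+y)*log (a+y) - (b+y)*log (b+y) := by
  have hb : 0 < b := ha.trans hab
  have hay : 0 < a + y := by linarith
  have hby : 0 < b + y := by linarith
  have hlim := ratio_tendsto (α:=b+1) (β:=a+1) (γ:=b+y) (δ:=a+y)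
    (by linarith) (by linarith) hby hay (by ring)
  set C : ℝ := (b+1)*log (b+1) - (a+1)*log (a+1) + (a+y)*log (a+y) - (b+y)*log (b+y) with hC
  have key : ∀ n : ℕ,
      (∑ k ∈ range (n+1), (log (a+1+↑k) + log (b+y+↑k) - log (b+1+↑k) - log (a+y+↑k)))
        ≤ C + (y/((n:ℝ)+1)) * (b-a) := by
    intro n
    set Ψ : ℝ → ℝ := fun t => (∑ k ∈ range (n+1), (log (t+(1+↑k)) - log (t+(y+↑k))))
      + (t+1)*log (t+1) - (t+y)*log (t+y) - Wn y n t with hΨ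
    have hmono : Ψ a ≤ Ψ b := by
      refine mono_aux (f' := fun x => (∑ k ∈ range (n+1), (1/(x+(1+↑k)) - 1/(x+(y+↑k))))
        + (log (x+1) + 1) - (log (x+y) + 1) - Sn y n x) ?_ ?_ ha hab.le
      · intro x hx
        have hsum : HasDerivAt (fun t => ∑ k ∈ range (n+1), (log (t+(1+↑k)) - log (t+(y+↑k))))
            (∑ k ∈ range (n+1), (1/(x+(1+↑k)) - 1/(x+(y+↑k)))) x := by
          apply HasDerivAt.fun_sum
          intro k _
          have hk0 : (0:ℝ) ≤ (k:ℝ) := Nat.cast_nonneg k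
          exact (hd_log' (1+↑k) x (by nlinarith)).sub (hd_log' (y+↑k) x (by nlinarith))
        have h2 : HasDerivAt (fun t : ℝ => (t+1)*log (t+1)) (log (x+1) + 1) x :=
          hd_mul_log 1 x (by linarith)
        have h3 : HasDerivAt (fun t : ℝ => (t+y)*log (t+y)) (log (x+y) + 1) x :=
          hd_mul_log y x (by nlinarith)
        exact (((hsum.add h2).sub h3).sub (hd_Wn hy n hx))
      · intro x hx
        set g : ℕ → ℝ := fun k => log (x+(1+↑k)) - log (x+(y+↑k)) with hg
        have htel : ∑ k ∈ range (n+1), (g k - g (k+1)) = g 0 - g (n+1) :=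
          Finset.sum_range_sub' g (n+1)
        have hterm : ∀ k ∈ range (n+1), 1/(x+(y+↑k)) - 1/(x+(1+↑k)) ≤ g k - g (k+1) := by
          intro k _
          have hk0 : (0:ℝ) ≤ (k:ℝ) := Nat.cast_nonneg k
          have hF := F_mono (s := x+(1+↑k)) (w := x+(y+↑k)) (by positivity) (by linarith)
          rw [show x+(1+(k:ℝ))+1 = x+(1+((k:ℝ)+1)) from by ring,
            show x+(y+(k:ℝ))+1 = x+(y+((k:ℝ)+1)) from by ring] at hF
          simp only [hg]
          push_cast
          linarith
        have hsum_le : ∑ k ∈ range (n+1), (1/(x+(y+↑k)) - 1/(x+(1+↑k))) ≤ g 0 - g (n+1) :=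
          htel ▸ Finset.sum_le_sum hterm
        have hg0 : g 0 = log (x+1) - log (x+y) := by
          simp only [hg]; norm_num
        have hgn : g (n+1) = log (x+((n:ℝ)+2)) - log (x+(y+((n:ℝ)+1))) := by
          simp only [hg]
          push_cast
          rw [show (1:ℝ)+((n:ℝ)+1) = (n:ℝ)+2 from by ring]
        rw [hg0, hgn] at hsum_le
        have hflip : ∑ k ∈ range (n+1), (1/(x+(y+↑k)) - 1/(x+(1+↑k)))
            = - ∑ k ∈ range (n+1), (1/(x+(1+↑k)) - 1/(x+(y+↑k))) := by
          rw [← Finset.sum_neg_distrib]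
          exact Finset.sum_congr rfl fun k _ => by ring
        rw [hflip] at hsum_le
        simp only [Sn]
        linarith
    have hLdiff : (∑ k ∈ range (n+1), (log (a+(1+↑k)) - log (a+(y+↑k))))
        - (∑ k ∈ range (n+1), (log (b+(1+↑k)) - log (b+(y+↑k))))
        = ∑ k ∈ range (n+1), (log (a+1+↑k) + log (b+y+↑k) - log (b+1+↑k) - log (a+y+↑k)) := by
      rw [← Finset.sum_sub_distrib]
      refine Finset.sum_congr rfl fun k _ => ?_
      rw [show a+(1+(k:ℝ)) = a+1+(k:ℝ) from by ring, show a+(y+(k:ℝ)) = a+y+(k:ℝ) from by ring,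
        show b+(1+(k:ℝ)) = b+1+(k:ℝ) from by ring, show b+(y+(k:ℝ)) = b+y+(k:ℝ) from by ring]
      ring
    have hWd := Wn_diff_bound hy n ha hab.le
    rw [abs_le] at hWd
    simp only [hΨ] at hmono
    rw [← hLdiff]
    simp only [hC]
    linarith [hmono, hWd.2]
  have h0' : Tendsto (fun n:ℕ => ((n:ℝ)+1)) atTop atTop :=
    tendsto_atTop_add_const_right atTop 1 tendsto_natCast_atTop_atTop
  have h0 : Tendsto (fun n:ℕ => y/((n:ℝ)+1)) atTop (𝓝 0) := by
    simpa [div_eq_mul_inv] using h0'.inv_tendsto_atTop.const_mul y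
  have hbound : Tendsto (fun n:ℕ => C + (y/((n:ℝ)+1)) * (b-a)) atTop (𝓝 C) := by
    have := (tendsto_const_nhds (x := C) (f := (atTop : Filter ℕ))).add (h0.mul_const (b-a))
    simpa using this
  exact le_of_tendsto_of_tendsto' hlim hbound key

lemma exp_clog {x : ℝ} (c : ℝ) (hx : 0 < x) : Real.exp (c * Real.log x) = x ^ c := by
  rw [Real.rpow_def_of_pos hx, mul_comm]

theorem stmt5 (a b y : ℝ) (ha : 0 < a) (hab : a < b) (hy : 1 ≤ y) :
    b ^ (b - 1) * (a + y - 1) ^ (a + y - 1) / (a ^ (a - 1) * (b + y - 1) ^ (b + y - 1)) ≤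
        B b y / B a y ∧
      B b y / B a y ≤
        a * (b + 1) ^ (b + 1) * (a + y) ^ (a + y) /
          (b * (a + 1) ^ (a + 1) * (b + y) ^ (b + y)) := by
  have hb : 0 < b := ha.trans hab
  have hy0 : 0 < y := lt_of_lt_of_le one_pos hy
  have hay : 0 < a + y := by linarith
  have hby : 0 < b + y := by linarith
  have hay1 : 0 < a + y - 1 := by linarith
  have hby1 : 0 < b + y - 1 := by linarith
  have hGa := Real.Gamma_pos_of_pos ha
  have hGb := Real.Gamma_pos_of_pos hb
  have hGy := Real.Gamma_pos_of_pos hy0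
  have hGay := Real.Gamma_pos_of_pos hay
  have hGby := Real.Gamma_pos_of_pos hby
  have hR_eq : B b y / B a y
      = Real.Gamma b * Real.Gamma (a+y) / (Real.Gamma a * Real.Gamma (b+y)) := by
    rw [B_eq hb hy0, B_eq ha hy0]
    field_simp
  have hRpos : 0 < B b y / B a y := by
    rw [hR_eq]; positivity
  constructor
  · -- lower bound
    have hlc := lower_core ha hab hy
    rw [show a+(y-1) = a+y-1 from by ring, show b+(y-1) = b+y-1 from by ring, ← hR_eq] at hlc
    have eX : b^(b-1) * (a+y-1)^(a+y-1) / (a^(a-1) * (b+y-1)^(b+y-1))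
        = Real.exp ((b-1)*log b - (a-1)*log a + (a+y-1)*log (a+y-1)
            - (b+y-1)*log (b+y-1)) := by
      rw [show (b-1)*log b - (a-1)*log a + (a+y-1)*log (a+y-1) - (b+y-1)*log (b+y-1)
        = ((b-1)*log b + (a+y-1)*log (a+y-1)) - ((a-1)*log a + (b+y-1)*log (b+y-1))
        from by ring, Real.exp_sub, Real.exp_add, Real.exp_add,
        exp_clog _ hb, exp_clog _ hay1, exp_clog _ ha, exp_clog _ hby1]
    rw [eX, ← Real.exp_log hRpos]
    exact Real.exp_le_exp.mpr hlc
  · -- upper bound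
    have huc := upper_core ha hab hy
    have hR'pos : 0 < Real.Gamma (b+1) * Real.Gamma (a+y) / (Real.Gamma (a+1) * Real.Gamma (b+y)) := by
      have := Real.Gamma_pos_of_pos (show (0:ℝ) < a+1 by linarith)
      have := Real.Gamma_pos_of_pos (show (0:ℝ) < b+1 by linarith)
      positivity
    have hR'_eq : Real.Gamma (b+1) * Real.Gamma (a+y) / (Real.Gamma (a+1) * Real.Gamma (b+y))
        = (b/a) * (B b y / B a y) := by
      rw [hR_eq, Real.Gamma_add_one hb.ne', Real.Gamma_add_one ha.ne']
      field_simp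
    have hexp : Real.Gamma (b+1) * Real.Gamma (a+y) / (Real.Gamma (a+1) * Real.Gamma (b+y))
        ≤ Real.exp ((b+1)*log (b+1) - (a+1)*log (a+1) + (a+y)*log (a+y) - (b+y)*log (b+y)) := by
      rw [← Real.exp_log hR'pos]
      exact Real.exp_le_exp.mpr huc
    have eY : Real.exp ((b+1)*log (b+1) - (a+1)*log (a+1) + (a+y)*log (a+y) - (b+y)*log (b+y))
        = (b+1)^(b+1) * (a+y)^(a+y) / ((a+1)^(a+1) * (b+y)^(b+y)) := by
      rw [show (b+1)*log (b+1) - (a+1)*log (a+1) + (a+y)*log (a+y) - (b+y)*log (b+y)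
        = ((b+1)*log (b+1) + (a+y)*log (a+y)) - ((a+1)*log (a+1) + (b+y)*log (b+y))
        from by ring, Real.exp_sub, Real.exp_add, Real.exp_add,
        exp_clog _ (show (0:ℝ) < b+1 by linarith), exp_clog _ hay,
        exp_clog _ (show (0:ℝ) < a+1 by linarith), exp_clog _ hby]
    rw [hR'_eq, eY] at hexp
    have h3 := mul_le_mul_of_nonneg_left hexp (div_pos ha hb).le
    have e1 : a/b * (b/a * (B b y / B a y)) = B b y / B a y := by
      rw [show a/b * (b/a * (B b y / B a y)) = ((a*b)/(a*b)) * (B b y / B a y) from by ring,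
        div_self (by positivity : (a*b) ≠ 0), one_mul]
    have e2 : a/b * ((b+1)^(b+1) * (a+y)^(a+y) / ((a+1)^(a+1) * (b+y)^(b+y)))
        = a * (b + 1) ^ (b + 1) * (a + y) ^ (a + y) /
          (b * (a + 1) ^ (a + 1) * (b + y) ^ (b + y)) := by
      ring
    rw [e1, e2] at h3
    exact h3
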